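/- arXiv:1910.10297 — 2 statements merged into one kernel-verified Lean document; each statement's English description precedes it below -/
import Mathlib

section
/- Let σ ⊆ ℝ^d be a rational polyhedral cone generated by finitely many lattice points in ℤ^d. Then its dual cone σ^∨ = {m ∈ ℝ^d : ⟨m, v⟩ ≥ 0 for all v ∈ σ} is also a rational polyhedral cone, i.e., it is generated by finitely many lattice points of ℤ^d. -/
open Set Pointwise

noncomputable section

/-- The standard dot product pairing on `Fin d → ℝ`. -/
def dotR {d : ℕ} (m v : Fin d → ℝ) : ℝ := ∑ i, m i * v i

/-- The cast of an integer lattice vector to a real vector. -/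
def zCast {d : ℕ} (u : Fin d → ℤ) : Fin d → ℝ := fun i => (u i : ℝ)

/-- The convex cone generated by finitely many vectors `v 0, …, v (s-1)`:
all nonnegative real combinations. -/
def coneOf {d s : ℕ} (v : Fin s → Fin d → ℝ) : Set (Fin d → ℝ) :=
  {x | ∃ c : Fin s → ℝ, (∀ i, 0 ≤ c i) ∧ x = ∑ i, c i • v i}

/-- The dual cone of a set `σ`: all `m` pairing nonnegatively with every element of `σ`. -/
def dualCone {d : ℕ} (σ : Set (Fin d → ℝ)) : Set (Fin d → ℝ) :=
  {m | ∀ v ∈ σ, 0 ≤ dotR m v}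

variable {d : ℕ}

/-- Cone generated by a finset of vectors. -/
def coneF (F : Finset (Fin d → ℝ)) : Set (Fin d → ℝ) :=
  {x | ∃ c : (Fin d → ℝ) → ℝ, (∀ g, 0 ≤ c g) ∧ x = ∑ g ∈ F, c g • g}

lemma dotR_sum_smul_left (F : Finset (Fin d → ℝ)) (f : (Fin d → ℝ) → ℝ) (a : Fin d → ℝ) :
    dotR (∑ g ∈ F, f g • g) a = ∑ g ∈ F, f g * dotR g a := by
  unfold dotR
  simp only [Finset.sum_apply, Pi.smul_apply, smul_eq_mul, Finset.sum_mul, Finset.mul_sum]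
  rw [Finset.sum_comm]
  exact Finset.sum_congr rfl fun g _ => Finset.sum_congr rfl fun i _ => by ring

lemma dotR_sum_smul_right {s : ℕ} (m : Fin d → ℝ) (c : Fin s → ℝ) (w : Fin s → Fin d → ℝ) :
    dotR m (∑ i, c i • w i) = ∑ i, c i * dotR m (w i) := by
  unfold dotR
  simp only [Finset.sum_apply, Pi.smul_apply, smul_eq_mul, Finset.mul_sum]
  rw [Finset.sum_comm]
  exact Finset.sum_congr rfl fun g _ => Finset.sum_congr rfl fun i _ => by ring

lemma sum_extend {A B : Finset (Fin d → ℝ)} (h : A ⊆ B) (f : (Fin d → ℝ) → ℝ) :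
    ∑ g ∈ B, (if g ∈ A then f g else 0) • g = ∑ g ∈ A, f g • g := by
  have h1 : ∑ g ∈ A, (if g ∈ A then f g else 0) • g
      = ∑ g ∈ B, (if g ∈ A then f g else 0) • g :=
    Finset.sum_subset h (fun z _ hz => by rw [if_neg hz, zero_smul])
  rw [← h1]
  exact Finset.sum_congr rfl fun z hz => by rw [if_pos hz]

lemma zero_mem_coneF (F : Finset (Fin d → ℝ)) : (0 : Fin d → ℝ) ∈ coneF F :=
  ⟨0, fun _ => le_refl 0, by simp⟩

lemma coneF_union_add {A B : Finset (Fin d → ℝ)} {x y : Fin d → ℝ}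
    (hx : x ∈ coneF A) (hy : y ∈ coneF B) : x + y ∈ coneF (A ∪ B) := by
  obtain ⟨f, hf, rfl⟩ := hx
  obtain ⟨g, hg, rfl⟩ := hy
  refine ⟨(fun z => if z ∈ A then f z else 0) + fun z => if z ∈ B then g z else 0,
    fun z => ?_, ?_⟩
  · dsimp only [Pi.add_apply]
    apply add_nonneg
    · split
      · exact hf z
      · exact le_refl 0
    · split
      · exact hg z
      · exact le_refl 0
  · simp only [Pi.add_apply, add_smul, Finset.sum_add_distrib]
    rw [sum_extend Finset.subset_union_left, sum_extend Finset.subset_union_right]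

lemma coneF_mono {A B : Finset (Fin d → ℝ)} (h : A ⊆ B) : coneF A ⊆ coneF B := by
  intro x hx
  obtain ⟨f, hf, rfl⟩ := hx
  refine ⟨fun z => if z ∈ A then f z else 0, fun z => ?_, (sum_extend h f).symm⟩
  dsimp only; split
  · exact hf z
  · exact le_refl 0

lemma sum_smul_mem_coneF_image {ι : Type*} (s : Finset ι) (h : ι → Fin d → ℝ)
    (c : ι → ℝ) (hc : ∀ p ∈ s, 0 ≤ c p) :
    ∑ p ∈ s, c p • h p ∈ coneF (s.image h) := by
  refine ⟨fun g => ∑ p ∈ s.filter (fun p => h p = g), c p,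
    fun g => Finset.sum_nonneg fun p hp => hc p (Finset.mem_filter.1 hp).1, ?_⟩
  rw [← Finset.sum_fiberwise_of_maps_to (g := h) (t := s.image h)
    (fun p hp => Finset.mem_image_of_mem h hp) (fun p => c p • h p)]
  refine Finset.sum_congr rfl fun g _ => ?_
  rw [Finset.sum_smul]
  exact Finset.sum_congr rfl fun p hp => by rw [(Finset.mem_filter.1 hp).2]

lemma coneF_image_of_injective {ι : Type*} [Fintype ι] (h : ι → Fin d → ℝ)
    (hinj : Function.Injective h) :
    coneF (Finset.univ.image h) = {x | ∃ c : ι → ℝ, (∀ i, 0 ≤ c i) ∧ x = ∑ i, c i • h i} := by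
  ext x
  constructor
  · rintro ⟨f, hf, rfl⟩
    refine ⟨fun i => f (h i), fun i => hf _, ?_⟩
    rw [Finset.sum_image (fun a _ b _ hab => hinj hab)]
  · rintro ⟨c, hc, rfl⟩
    refine ⟨fun g => if hg : ∃ i, h i = g then c hg.choose else 0, ?_, ?_⟩
    · intro g; dsimp only; split
      · exact hc _
      · exact le_refl 0
    · rw [Finset.sum_image (fun a _ b _ hab => hinj hab)]
      refine Finset.sum_congr rfl fun i _ => ?_
      have hex : ∃ j, h j = h i := ⟨i, rfl⟩
      simp only [hex, dif_pos]
      rw [hinj hex.choose_spec]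
lemma dotR_smul_left (r : ℝ) (x a : Fin d → ℝ) : dotR (r • x) a = r * dotR x a := by
  unfold dotR
  rw [Finset.mul_sum]
  exact Finset.sum_congr rfl fun i _ => by simp; ring

lemma dotR_sub_left (x y a : Fin d → ℝ) : dotR (x - y) a = dotR x a - dotR y a := by
  unfold dotR
  rw [← Finset.sum_sub_distrib]
  exact Finset.sum_congr rfl fun i _ => by simp [Pi.sub_apply]; ring

lemma mem_coneF_of_sum {F : Finset (Fin d → ℝ)} (c : (Fin d → ℝ) → ℝ)
    (hc : ∀ g, 0 ≤ c g) : ∑ g ∈ F, c g • g ∈ coneF F := ⟨c, hc, rfl⟩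

lemma mem_coneF_self {F : Finset (Fin d → ℝ)} {p : Fin d → ℝ} (hp : p ∈ F) : p ∈ coneF F := by
  refine ⟨fun z => if z ∈ ({p} : Finset (Fin d → ℝ)) then 1 else 0, fun z => ?_, ?_⟩
  · dsimp only; split
    · exact zero_le_one
    · exact le_refl 0
  · rw [sum_extend (Finset.singleton_subset_iff.2 hp)]
    simp

lemma coneF_add_mem {F : Finset (Fin d → ℝ)} {x y : Fin d → ℝ}
    (hx : x ∈ coneF F) (hy : y ∈ coneF F) : x + y ∈ coneF F := by
  have := coneF_union_add hx hy
  rwa [Finset.union_self] at this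

lemma coneF_smul_mem {F : Finset (Fin d → ℝ)} {x : Fin d → ℝ} {r : ℝ}
    (hr : 0 ≤ r) (hx : x ∈ coneF F) : r • x ∈ coneF F := by
  obtain ⟨f, hf, rfl⟩ := hx
  refine ⟨fun z => r * f z, fun z => mul_nonneg hr (hf z), ?_⟩
  rw [Finset.smul_sum]
  exact Finset.sum_congr rfl fun z _ => by rw [smul_smul]

open scoped Classical in
/-- One step of the double description method. -/
def ddG (F : Finset (Fin d → ℝ)) (a : Fin d → ℝ) : Finset (Fin d → ℝ) :=
  F.filter (fun g => 0 ≤ dotR g a) ∪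
    ((F.filter (fun g => 0 ≤ dotR g a)) ×ˢ (F.filter (fun g => ¬ 0 ≤ dotR g a))).image
      (fun p => dotR p.1 a • p.2 - dotR p.2 a • p.1)

open scoped Classical in
lemma ddG_spec (F : Finset (Fin d → ℝ)) (a : Fin d → ℝ) :
    coneF (ddG F a) = coneF F ∩ {x | 0 ≤ dotR x a} := by
  set P := F.filter (fun g => 0 ≤ dotR g a) with hP
  set N := F.filter (fun g => ¬ 0 ≤ dotR g a) with hN
  set W := (P ×ˢ N).image (fun p => dotR p.1 a • p.2 - dotR p.2 a • p.1) with hW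
  have hGgen : ∀ g ∈ ddG F a, g ∈ coneF F ∧ 0 ≤ dotR g a := by
    intro g hg
    rcases Finset.mem_union.1 hg with hg | hg
    · exact ⟨mem_coneF_self (Finset.mem_filter.1 hg).1, (Finset.mem_filter.1 hg).2⟩
    · obtain ⟨p, hp, rfl⟩ := Finset.mem_image.1 hg
      obtain ⟨hp1, hp2⟩ := Finset.mem_product.1 hp
      obtain ⟨hp1F, hp1n⟩ := Finset.mem_filter.1 hp1
      obtain ⟨hp2F, hp2n⟩ := Finset.mem_filter.1 hp2
      constructor
      · rw [sub_eq_add_neg, ← neg_smul]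
        exact coneF_add_mem (coneF_smul_mem hp1n (mem_coneF_self hp2F))
          (coneF_smul_mem (by linarith [not_le.1 hp2n]) (mem_coneF_self hp1F))
      · rw [dotR_sub_left, dotR_smul_left, dotR_smul_left]
        ring_nf
        exact le_refl 0
  ext x
  constructor
  · rintro ⟨f, hf, rfl⟩
    constructor
    · refine Finset.sum_induction _ _ (fun _ _ => coneF_add_mem) (zero_mem_coneF F) ?_
      intro g hg
      exact coneF_smul_mem (hf g) (hGgen g hg).1
    · show 0 ≤ dotR _ a
      rw [dotR_sum_smul_left]
      exact Finset.sum_nonneg fun g hg => mul_nonneg (hf g) (hGgen g hg).2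
  · rintro ⟨⟨c, hc, rfl⟩, hx⟩
    rw [mem_setOf_eq, dotR_sum_smul_left] at hx
    set lam := ∑ g ∈ P, c g * dotR g a with hlam
    set mu := -∑ k ∈ N, c k * dotR k a with hmu
    have hsplit : ∑ g ∈ F, c g * dotR g a = lam - mu := by
      rw [hlam, hmu, ← Finset.sum_filter_add_sum_filter_not F (fun g => 0 ≤ dotR g a)]
      ring
    have hlam0 : 0 ≤ lam :=
      Finset.sum_nonneg fun g hg => mul_nonneg (hc g) (Finset.mem_filter.1 hg).2
    have hmu0 : 0 ≤ mu := by
      rw [hmu, ← Finset.sum_neg_distrib]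
      exact Finset.sum_nonneg fun k hk =>
        neg_nonneg.2 (mul_nonpos_of_nonneg_of_nonpos (hc k)
          (le_of_lt (not_le.1 (Finset.mem_filter.1 hk).2)))
    have hmulelam : mu ≤ lam := by rw [hsplit] at hx; linarith
    have hxsplit : ∑ g ∈ F, c g • g = ∑ g ∈ P, c g • g + ∑ k ∈ N, c k • k :=
      (Finset.sum_filter_add_sum_filter_not F (fun g => 0 ≤ dotR g a) _).symm
    by_cases hl : lam = 0
    · -- then mu = 0 and all negative-side coefficients vanish
      have hmueq : mu = 0 := le_antisymm (hl ▸ hmulelam) hmu0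
      have hzero : ∀ k ∈ N, c k • k = (0 : Fin d → ℝ) := by
        intro k hk
        have h1 : ∀ k ∈ N, 0 ≤ -(c k * dotR k a) := fun k hk =>
          neg_nonneg.2 (mul_nonpos_of_nonneg_of_nonpos (hc k)
            (le_of_lt (not_le.1 (Finset.mem_filter.1 hk).2)))
        have h2 : ∑ k ∈ N, -(c k * dotR k a) = 0 := by
          rw [Finset.sum_neg_distrib, ← hmu] at *
          linarith [hmueq]
        have h3 := (Finset.sum_eq_zero_iff_of_nonneg h1).1 h2 k hk
        have h4 : c k = 0 := by
          have := not_le.1 (Finset.mem_filter.1 hk).2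
          rcases mul_eq_zero.1 (by linarith : c k * dotR k a = 0) with h | h
          · exact h
          · linarith
        rw [h4, zero_smul]
      have : ∑ g ∈ F, c g • g = ∑ g ∈ P, c g • g := by
        rw [hxsplit, Finset.sum_eq_zero hzero, add_zero]
      rw [this]
      exact coneF_mono Finset.subset_union_left (mem_coneF_of_sum c hc)
    · have hlpos : 0 < lam := lt_of_le_of_ne hlam0 (Ne.symm hl)
      set t := mu / lam with ht
      have ht0 : 0 ≤ t := div_nonneg hmu0 (le_of_lt hlpos)
      have ht1 : t ≤ 1 := (div_le_one hlpos).2 hmulelam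
      -- the double-description identity
      have hS : ∑ p ∈ P ×ˢ N, ((c p.1 * c p.2) / lam) • (dotR p.1 a • p.2 - dotR p.2 a • p.1)
          = ∑ k ∈ N, c k • k + ∑ g ∈ P, (c g * t) • g := by
        rw [Finset.sum_product]
        have step : ∀ g ∈ P,
            ∑ k ∈ N, ((c g * c k) / lam) • (dotR g a • k - dotR k a • g)
            = ∑ k ∈ N, ((c g * c k) / lam * dotR g a) • k + (c g * t) • g := by
          intro g hg
          have e1 : ∀ k ∈ N, ((c g * c k) / lam) • (dotR g a • k - dotR k a • g)
              = ((c g * c k) / lam * dotR g a) • k - ((c g * c k) / lam * dotR k a) • g := by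
            intro k _
            rw [smul_sub, smul_smul, smul_smul]
          rw [Finset.sum_congr rfl e1, Finset.sum_sub_distrib, ← Finset.sum_smul]
          have e2 : ∑ k ∈ N, (c g * c k) / lam * dotR k a = -(c g * t) := by
            have : ∑ k ∈ N, (c g * c k) / lam * dotR k a
                = (c g / lam) * ∑ k ∈ N, c k * dotR k a := by
              rw [Finset.mul_sum]
              exact Finset.sum_congr rfl fun k _ => by ring
            rw [this]
            have : ∑ k ∈ N, c k * dotR k a = -mu := by rw [hmu, neg_neg]
            rw [this, ht]
            field_simp
          rw [e2, neg_smul, sub_neg_eq_add]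
        rw [Finset.sum_congr rfl step, Finset.sum_add_distrib]
        congr 1
        · rw [Finset.sum_comm]
          refine Finset.sum_congr rfl fun k hk => ?_
          rw [← Finset.sum_smul]
          congr 1
          have : ∑ g ∈ P, (c g * c k) / lam * dotR g a
              = (c k / lam) * ∑ g ∈ P, c g * dotR g a := by
            rw [Finset.mul_sum]
            exact Finset.sum_congr rfl fun g _ => by ring
          rw [this, ← hlam]
          field_simp
      have key : ∑ g ∈ F, c g • g
          = ∑ g ∈ P, (c g * (1 - t)) • g
            + ∑ p ∈ P ×ˢ N, ((c p.1 * c p.2) / lam) • (dotR p.1 a • p.2 - dotR p.2 a • p.1) := by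
        have comb : ∑ g ∈ P, (c g * (1 - t)) • g + ∑ g ∈ P, (c g * t) • g
            = ∑ g ∈ P, c g • g := by
          rw [← Finset.sum_add_distrib]
          refine Finset.sum_congr rfl fun g _ => ?_
          rw [← add_smul]
          congr 1
          ring
        rw [hS, hxsplit, ← comb]
        abel
      rw [key]
      refine coneF_union_add (mem_coneF_of_sum _ fun g => mul_nonneg (hc g) (by linarith)) ?_
      exact sum_smul_mem_coneF_image _ _ _ fun p hp =>
        div_nonneg (mul_nonneg (hc p.1) (hc p.2)) (le_of_lt hlpos)
lemma zCast_dot (u w : Fin d → ℤ) :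
    dotR (zCast u) (zCast w) = ((∑ i, u i * w i : ℤ) : ℝ) := by
  unfold dotR zCast
  push_cast
  rfl

open scoped Classical in
lemma ddG_rat (F : Finset (Fin d → ℝ)) (aw : Fin d → ℤ)
    (hF : ∀ g ∈ F, ∃ w : Fin d → ℤ, g = zCast w) :
    ∀ g ∈ ddG F (zCast aw), ∃ w : Fin d → ℤ, g = zCast w := by
  intro g hg
  rcases Finset.mem_union.1 hg with hg | hg
  · exact hF g (Finset.mem_filter.1 hg).1
  · obtain ⟨p, hp, rfl⟩ := Finset.mem_image.1 hg
    obtain ⟨hp1, hp2⟩ := Finset.mem_product.1 hp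
    obtain ⟨u1, hu1⟩ := hF p.1 (Finset.mem_filter.1 hp1).1
    obtain ⟨u2, hu2⟩ := hF p.2 (Finset.mem_filter.1 hp2).1
    refine ⟨(∑ i, u1 i * aw i) • u2 - (∑ i, u2 i * aw i) • u1, ?_⟩
    rw [hu1, hu2, zCast_dot, zCast_dot]
    funext i
    simp only [zCast, Pi.sub_apply, Pi.smul_apply, smul_eq_mul]
    push_cast
    ring

open scoped Classical in
lemma cone_inter_halfspaces (l : List (Fin d → ℤ)) :
    ∀ F : Finset (Fin d → ℝ), (∀ g ∈ F, ∃ w : Fin d → ℤ, g = zCast w) →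
      ∃ G : Finset (Fin d → ℝ), (∀ g ∈ G, ∃ w : Fin d → ℤ, g = zCast w) ∧
        coneF G = coneF F ∩ {m | ∀ a ∈ l, 0 ≤ dotR m (zCast a)} := by
  induction l with
  | nil =>
    intro F hF
    refine ⟨F, hF, ?_⟩
    simp
  | cons a l ih =>
    intro F hF
    obtain ⟨G, hG, hEq⟩ := ih (ddG F (zCast a)) (ddG_rat F a hF)
    refine ⟨G, hG, ?_⟩
    rw [hEq, ddG_spec, Set.inter_assoc]
    congr 1
    ext m
    simp only [Set.mem_inter_iff, Set.mem_setOf_eq, List.mem_cons]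
    constructor
    · rintro ⟨h2, h3⟩ b hb
      rcases hb with rfl | hb
      exacts [h2, h3 b hb]
    · intro h2
      exact ⟨h2 a (Or.inl rfl), fun b hb => h2 b (Or.inr hb)⟩

/-- The base generating family for all of `ℝ^d`: `±` standard basis vectors. -/
def hbase (p : Fin d × Bool) : Fin d → ℝ :=
  (if p.2 then (1 : ℝ) else -1) • (Pi.single p.1 1 : Fin d → ℝ)

lemma hbase_rat (p : Fin d × Bool) : ∃ w : Fin d → ℤ, hbase p = zCast w := by
  refine ⟨(if p.2 then (1 : ℤ) else -1) • Pi.single p.1 (1 : ℤ), ?_⟩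
  funext i
  simp only [hbase, zCast, Pi.smul_apply, smul_eq_mul, Pi.single_apply]
  cases p.2 <;> simp

lemma hbase_inj : Function.Injective (hbase (d := d)) := by
  rintro ⟨i, b⟩ ⟨j, b'⟩ h
  have hi := congrFun h i
  simp only [hbase, Pi.smul_apply, smul_eq_mul, Pi.single_apply] at hi
  have hij : i = j := by
    by_contra hij
    simp only [if_pos rfl, if_neg (fun hh : i = j => hij hh), mul_one, mul_zero] at hi
    cases b <;> norm_num at hi
  subst hij
  simp only [if_pos rfl, mul_one] at hi
  have hb : b = b' := by
    revert hi; cases b <;> cases b' <;> norm_num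
  rw [hb]

lemma coneF_base : coneF (Finset.univ.image (hbase (d := d))) = Set.univ := by
  rw [coneF_image_of_injective hbase hbase_inj]
  ext x
  simp only [Set.mem_setOf_eq, Set.mem_univ, iff_true]
  refine ⟨fun p => if p.2 then max (x p.1) 0 else max (-x p.1) 0, fun p => ?_, ?_⟩
  · dsimp only; split <;> exact le_max_right _ _
  · rw [Fintype.sum_prod_type]
    have : ∀ i : Fin d, ∑ b : Bool,
        (if b then max (x i) 0 else max (-x i) 0) • hbase (i, b)
        = Pi.single i (x i) := by
      intro i
      rw [Fintype.sum_bool]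
      have h1 : hbase (i, true) = (Pi.single i 1 : Fin d → ℝ) := by
        simp [hbase]
      have h2 : hbase (i, false) = -(Pi.single i 1 : Fin d → ℝ) := by
        simp [hbase]
      show max (x i) 0 • hbase (i, true) + max (-x i) 0 • hbase (i, false) = _
      rw [h1, h2, smul_neg, ← sub_eq_add_neg, ← sub_smul,
        max_zero_sub_max_neg_zero_eq_self, ← Pi.single_smul, smul_eq_mul, mul_one]
    rw [Finset.sum_congr rfl fun i _ => this i]
    exact (Finset.univ_sum_single x).symm

lemma dualCone_coneOf {s : ℕ} (w : Fin s → Fin d → ℝ) :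
    dualCone (coneOf w) = {m | ∀ i, 0 ≤ dotR m (w i)} := by
  ext m
  constructor
  · intro hm i
    refine hm (w i) ⟨fun j => if j = i then 1 else 0, fun j => by dsimp only; split <;> simp, ?_⟩
    simp [ite_smul]
  · rintro hm v ⟨c, hc, rfl⟩
    rw [dotR_sum_smul_right]
    exact Finset.sum_nonneg fun i _ => mul_nonneg (hc i) (hm i)


/-- the dual of a rational polyhedral cone (generated by finitely many
lattice points) is again generated by finitely many lattice points. -/
theorem dualCone_of_rational_polyhedral_is_rational_polyhedral
    {d s : ℕ} (v : Fin s → Fin d → ℤ) :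
    ∃ (s' : ℕ) (u : Fin s' → Fin d → ℤ),
      dualCone (coneOf fun i => zCast (v i)) = coneOf fun j => zCast (u j) := by
  classical
  obtain ⟨G, hGrat, hGEq⟩ := cone_inter_halfspaces (List.ofFn v)
    (Finset.univ.image (hbase (d := d))) (by
      intro g hg
      obtain ⟨p, _, rfl⟩ := Finset.mem_image.1 hg
      exact hbase_rat p)
  set e : Fin G.card → {x // x ∈ G} := fun j => G.equivFin.symm j with he
  have hrat : ∀ j, ∃ w : Fin d → ℤ, ((e j : Fin d → ℝ)) = zCast w :=
    fun j => hGrat (e j) (e j).2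
  refine ⟨G.card, fun j => (hrat j).choose, ?_⟩
  have hval : (fun j => zCast ((hrat j).choose)) = fun j => ((e j : Fin d → ℝ)) := by
    funext j
    exact ((hrat j).choose_spec).symm
  have hinj : Function.Injective (fun j => ((e j : Fin d → ℝ))) :=
    fun a b hab => (Equiv.injective _) (Subtype.ext hab)
  have himg : Finset.univ.image (fun j => ((e j : Fin d → ℝ))) = G := by
    ext g
    simp only [Finset.mem_image, Finset.mem_univ, true_and]
    constructor
    · rintro ⟨j, rfl⟩; exact (e j).2
    · intro hg; exact ⟨G.equivFin ⟨g, hg⟩, by simp [he]⟩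
  have hcone : (coneOf fun j => zCast ((hrat j).choose)) = coneF G := by
    have h2 := coneF_image_of_injective (fun j => ((e j : Fin d → ℝ))) hinj
    rw [himg] at h2
    rw [hval]
    exact h2.symm
  rw [hcone, dualCone_coneOf, hGEq, coneF_base, Set.univ_inter]
  ext m
  simp only [Set.mem_setOf_eq, List.mem_ofFn]
  constructor
  · rintro h a ⟨i, rfl⟩
    exact h i
  · intro h i
    exact h (v i) ⟨i, rfl⟩
end
end

section
/- Let σ^∨ ⊆ ℝ^d be a full-dimensional strongly convex rational polyhedral cone, w ∈ σ^∨ ∩ ℚ^d, and let A ⊆ σ^∨ ∩ ℤ^d be finite nonempty with Newton polyhedron P = conv(A) + σ^∨ and t > 0 rational. Then ⋃_{n ≥ 1} ⋃_{f} (f + w + Int(σ^∨)) = w + Int(tP), where the inner union is over all f of the form (a₁ + ⋯ + a_m)/n with a_j ∈ A and m ≥ tn. Consequently the sum over all n and f of the monomial ideals with exponent sets {v : v − w − f ∈ Int(σ^∨)} has exponent set {v : v − w ∈ Int(tP)}. -/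
open Set Pointwise

noncomputable section

/-- Realize a family of multiplicities by a function out of `Fin m`. -/
lemma realize_multiplicities {α M : Type*} [AddCommMonoid M]
    (S : Finset α) (k : α → ℕ) (f : α → M) :
    ∃ a : Fin (∑ x ∈ S, k x) → α, (∀ j, a j ∈ S) ∧
      ∑ j, f (a j) = ∑ x ∈ S, k x • f x := by
  classical
  induction S using Finset.induction_on with
  | empty =>
      simp only [Finset.sum_empty]
      exact ⟨Fin.elim0, fun j => j.elim0, Finset.sum_eq_zero fun j _ => j.elim0⟩
  | @insert x S hx ih =>
      obtain ⟨a', ha'S, ha'sum⟩ := ih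
      rw [Finset.sum_insert hx]
      refine ⟨Fin.append (fun _ => x) a', ?_, ?_⟩
      · intro j
        refine Fin.addCases (fun i => ?_) (fun i => ?_) j
        · rw [Fin.append_left]; exact Finset.mem_insert_self x S
        · rw [Fin.append_right]; exact Finset.mem_insert_of_mem (ha'S i)
      · rw [Finset.sum_insert hx, Fin.sum_univ_add]
        simp only [Fin.append_left, Fin.append_right]
        rw [ha'sum, Finset.sum_const, Finset.card_univ, Fintype.card_fin]

section coneLemmas

variable {d : ℕ} {C : Set (Fin d → ℝ)}

lemma cone_add_interior (hadd : ∀ x ∈ C, ∀ y ∈ C, x + y ∈ C)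
    {c u : Fin d → ℝ} (hc : c ∈ C) (hu : u ∈ interior C) : c + u ∈ interior C := by
  have hsub : (fun y => c + y) '' interior C ⊆ C := by
    rintro _ ⟨y, hy, rfl⟩; exact hadd c hc y (interior_subset hy)
  have hopen : IsOpen ((fun y => c + y) '' interior C) :=
    (isOpenMap_add_left c) _ isOpen_interior
  exact interior_maximal hsub hopen ⟨u, hu, rfl⟩

lemma cone_smul_interior (hsmul : ∀ r : ℝ, 0 ≤ r → ∀ x ∈ C, r • x ∈ C)
    {r : ℝ} (hr : 0 < r) {u : Fin d → ℝ} (hu : u ∈ interior C) : r • u ∈ interior C := by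
  have hCr : r • C = C := by
    apply Subset.antisymm
    · rintro _ ⟨x, hx, rfl⟩; exact hsmul r hr.le x hx
    · intro x hx
      exact ⟨r⁻¹ • x, hsmul r⁻¹ (by positivity) x hx,
        by show r • r⁻¹ • x = x; rw [smul_smul, mul_inv_cancel₀ hr.ne', one_smul]⟩
  have h : r • u ∈ r • interior C := ⟨u, hu, rfl⟩
  rwa [← interior_smul₀ hr.ne', hCr] at h

lemma interior_add_cone (hadd : ∀ x ∈ C, ∀ y ∈ C, x + y ∈ C)
    (hsmul : ∀ r : ℝ, 0 ≤ r → ∀ x ∈ C, r • x ∈ C)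
    {u0 : Fin d → ℝ} (hu0 : u0 ∈ interior C) (S : Set (Fin d → ℝ)) :
    interior (S + C) = S + interior C := by
  apply Subset.antisymm
  · intro x hx
    obtain ⟨ε, hε, hball⟩ := Metric.mem_nhds_iff.1 (mem_interior_iff_mem_nhds.1 hx)
    set δ := ε / (2 * (‖u0‖ + 1)) with hδdef
    have hnorm1 : (0:ℝ) < ‖u0‖ + 1 := by positivity
    have hδ : 0 < δ := by positivity
    have hmem : x - δ • u0 ∈ S + C := by
      apply hball
      rw [Metric.mem_ball, dist_eq_norm]
      have h1 : x - δ • u0 - x = -(δ • u0) := by abel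
      rw [h1, norm_neg, norm_smul, Real.norm_of_nonneg hδ.le]
      have h2 : δ * (‖u0‖ + 1) = ε / 2 := by
        rw [hδdef]; field_simp
      nlinarith [norm_nonneg u0]
    obtain ⟨p, hp, c, hc, hpc⟩ := hmem
    have hpc' : p + c = x - δ • u0 := hpc
    refine ⟨p, hp, c + δ • u0,
      cone_add_interior hadd hc (cone_smul_interior hsmul hδ hu0), ?_⟩
    show p + (c + δ • u0) = x
    rw [← add_assoc, hpc']; abel
  · exact interior_maximal (add_subset_add_left interior_subset)
      (IsOpen.add_left isOpen_interior)

end coneLemmas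

/-- the union over all `n ≥ 1` and all `f = (a₁ + ⋯ + a_m)/n` with
`aⱼ ∈ A` and `m ≥ tn` of the translates `f + w + Int(σ^∨)` equals `w + Int(tP)`;
consequently the sum of the monomial ideals with exponent sets
`{v : v - w - f ∈ Int(σ^∨)}` has exponent set `{v : v - w ∈ Int(tP)}`. -/
theorem union_of_translates_eq_interior_dilate
    {d s : ℕ} (g : Fin s → Fin d → ℤ)
    (C : Set (Fin d → ℝ)) (hC : C = coneOf fun i => zCast (g i))
    (hsc : C ∩ (-C) = {0}) (hfd : Submodule.span ℝ C = ⊤)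
    (w : Fin d → ℝ) (hwC : w ∈ C) (hwq : ∃ wq : Fin d → ℚ, w = fun i => (wq i : ℝ))
    (A : Finset (Fin d → ℤ)) (hA : A.Nonempty) (hAC : ∀ a ∈ A, zCast a ∈ C)
    (P : Set (Fin d → ℝ)) (hP : P = convexHull ℝ (zCast '' ↑A) + C)
    (t : ℚ) (ht : 0 < t) :
    ({x : Fin d → ℝ | ∃ n m : ℕ, 0 < n ∧ t * (n : ℚ) ≤ (m : ℚ) ∧
        ∃ a : Fin m → Fin d → ℤ, (∀ j, a j ∈ A) ∧
          x - w - (n : ℝ)⁻¹ • (∑ j, zCast (a j)) ∈ interior C} =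
      {w} + interior ((t : ℝ) • P)) ∧
    (∀ v : Fin d → ℤ,
      (∃ n m : ℕ, 0 < n ∧ t * (n : ℚ) ≤ (m : ℚ) ∧
        ∃ a : Fin m → Fin d → ℤ, (∀ j, a j ∈ A) ∧
          zCast v - w - (n : ℝ)⁻¹ • (∑ j, zCast (a j)) ∈ interior C) ↔
      zCast v - w ∈ interior ((t : ℝ) • P)) := by
  classical
  -- basic cone properties
  have h0C : (0 : Fin d → ℝ) ∈ C := by
    rw [hC]; exact ⟨0, fun i => le_refl 0, by simp⟩
  have hadd : ∀ x ∈ C, ∀ y ∈ C, x + y ∈ C := by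
    rw [hC]; rintro x ⟨c, hc, rfl⟩ y ⟨c', hc', rfl⟩
    exact ⟨c + c', fun i => add_nonneg (hc i) (hc' i), by
      simp [add_smul, Finset.sum_add_distrib]⟩
  have hsmul : ∀ r : ℝ, 0 ≤ r → ∀ x ∈ C, r • x ∈ C := by
    rw [hC]; rintro r hr x ⟨c, hc, rfl⟩
    exact ⟨fun i => r * c i, fun i => mul_nonneg hr (hc i), by
      rw [Finset.smul_sum]; simp [smul_smul]⟩
  have hconv : Convex ℝ C := by
    intro x hx y hy a b ha hb hab
    exact hadd _ (hsmul a ha x hx) _ (hsmul b hb y hy)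
  -- nonempty interior
  have hspan : affineSpan ℝ C = ⊤ := by
    have h1 : (affineSpan ℝ (insert (0 : Fin d → ℝ) C) : Set (Fin d → ℝ)) =
        (Submodule.span ℝ C : Set (Fin d → ℝ)) := affineSpan_insert_zero C
    rw [Set.insert_eq_self.2 h0C, hfd] at h1
    apply AffineSubspace.coe_injective
    rw [h1]; simp
  have hIntNe : (interior C).Nonempty :=
    (hconv.interior_nonempty_iff_affineSpan_eq_top).2 hspan
  obtain ⟨u0, hu0⟩ := hIntNe
  set Q : Set (Fin d → ℝ) := convexHull ℝ (zCast '' ↑A) with hQ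
  have hQC : Q ⊆ C := convexHull_min (by rintro _ ⟨a, ha, rfl⟩; exact hAC a ha) hconv
  have htR : (0:ℝ) < (t:ℝ) := by exact_mod_cast ht
  have htC : (t:ℝ) • C = C := by
    apply Subset.antisymm
    · rintro _ ⟨x, hx, rfl⟩; exact hsmul _ htR.le x hx
    · intro x hx
      exact ⟨(t:ℝ)⁻¹ • x, hsmul _ (by positivity) x hx,
        by show (t:ℝ) • (t:ℝ)⁻¹ • x = x; rw [smul_smul, mul_inv_cancel₀ htR.ne', one_smul]⟩
  have htP : (t:ℝ) • P = ((t:ℝ) • Q) + C := by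
    rw [hP]
    have hdist : (t:ℝ) • (Q + C) = (t:ℝ) • Q + (t:ℝ) • C := by
      apply Subset.antisymm
      · rintro _ ⟨y, ⟨q, hq, c, hc, rfl⟩, rfl⟩
        exact ⟨_, ⟨q, hq, rfl⟩, _, ⟨c, hc, rfl⟩, (smul_add _ _ _).symm⟩
      · rintro _ ⟨_, ⟨q, hq, rfl⟩, _, ⟨c, hc, rfl⟩, rfl⟩
        exact ⟨q + c, ⟨q, hq, c, hc, rfl⟩, smul_add _ _ _⟩
    rw [hdist, htC]
  have hIntP : interior ((t:ℝ) • P) = ((t:ℝ) • Q) + interior C := by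
    rw [htP, interior_add_cone hadd hsmul hu0]
  -- the key equivalence
  have key : ∀ x : Fin d → ℝ,
      (∃ n m : ℕ, 0 < n ∧ t * (n : ℚ) ≤ (m : ℚ) ∧
        ∃ a : Fin m → Fin d → ℤ, (∀ j, a j ∈ A) ∧
          x - w - (n : ℝ)⁻¹ • (∑ j, zCast (a j)) ∈ interior C) ↔
      x - w ∈ interior ((t:ℝ) • P) := by
    intro x
    rw [hIntP]
    constructor
    · rintro ⟨n, m, hn, htn, a, haA, hmem⟩
      have hnR : (0:ℝ) < (n:ℝ) := by exact_mod_cast hn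
      have hm : 0 < m := by
        rcases Nat.eq_zero_or_pos m with h | h
        · exfalso
          subst h
          have h1 : (0:ℚ) < t * n := mul_pos ht (by exact_mod_cast hn)
          simp only [Nat.cast_zero] at htn
          linarith
        · exact h
      have hmR : (0:ℝ) < (m:ℝ) := by exact_mod_cast hm
      set σ := ∑ j, zCast (a j) with hσ
      set q' := (m:ℝ)⁻¹ • σ with hq'
      have hq'Q : q' ∈ Q := by
        rw [hq', hσ, Finset.smul_sum]
        apply (convex_convexHull ℝ _).sum_mem (fun j _ => by positivity)
        · rw [Finset.sum_const, Finset.card_univ, Fintype.card_fin, nsmul_eq_mul,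
            mul_inv_cancel₀ hmR.ne']
        · exact fun j _ => subset_convexHull ℝ _ ⟨a j, haA j, rfl⟩
      have htnR : (t:ℝ) * n ≤ (m:ℝ) := by exact_mod_cast htn
      have hr : 0 ≤ (m:ℝ)/(n:ℝ) - (t:ℝ) := by
        rw [sub_nonneg, le_div_iff₀ hnR]; linarith
      have hdecomp : (n:ℝ)⁻¹ • σ = (t:ℝ) • q' + ((m:ℝ)/(n:ℝ) - (t:ℝ)) • q' := by
        rw [hq', smul_smul, smul_smul, ← add_smul]
        congr 1
        field_simp
        ring
      refine ⟨(t:ℝ) • q', ⟨q', hq'Q, rfl⟩,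
        (((m:ℝ)/(n:ℝ) - (t:ℝ)) • q') + (x - w - (n:ℝ)⁻¹ • σ),
        cone_add_interior hadd (hsmul _ hr _ (hQC hq'Q)) hmem, ?_⟩
      rw [hdecomp]; abel
    · rintro ⟨_, ⟨q, hqQ, rfl⟩, u, hu, hx⟩
      obtain ⟨η, hη, hball⟩ := Metric.isOpen_iff.1 isOpen_interior u hu
      have hzinj : Function.Injective (zCast (d := d)) := by
        intro a b hab
        funext i
        have h := congrFun hab i
        simp only [zCast] at h
        exact_mod_cast h
      have himg : zCast '' (↑A : Set (Fin d → ℤ)) = ↑(A.image zCast) :=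
        (Finset.coe_image).symm
      rw [hQ, himg, Finset.convexHull_eq] at hqQ
      obtain ⟨lam, hlam0, hlam1, hcm⟩ := hqQ
      set μ : (Fin d → ℤ) → ℝ := fun a => lam (zCast a) with hμ
      have hμ0 : ∀ a ∈ A, 0 ≤ μ a := fun a ha =>
        hlam0 _ (Finset.mem_image_of_mem _ ha)
      have hμ1 : ∑ a ∈ A, μ a = 1 := by
        rw [← Finset.sum_image (fun x _ y _ h => hzinj h)]
        exact hlam1
      have hqrep : q = ∑ a ∈ A, μ a • zCast a := by
        rw [← hcm, Finset.centerMass_eq_of_sum_1 _ _ hlam1,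
          Finset.sum_image (fun x _ y _ h => hzinj h)]
        rfl
      set S := ∑ a ∈ A, ‖zCast a‖ with hS
      have hS0 : 0 ≤ S := Finset.sum_nonneg fun _ _ => norm_nonneg _
      obtain ⟨n, hn⟩ := exists_nat_gt (S / η)
      have hnR : (0:ℝ) < (n:ℝ) := by
        have h1 : (0:ℝ) ≤ S / η := by positivity
        linarith
      have hn0 : 0 < n := by exact_mod_cast hnR
      set k : (Fin d → ℤ) → ℕ := fun a => ⌈(t:ℝ) * n * μ a⌉₊ with hk
      obtain ⟨a, haA, hasum⟩ := realize_multiplicities A k zCast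
      refine ⟨n, ∑ x ∈ A, k x, hn0, ?_, a, haA, ?_⟩
      · have hR : (t:ℝ) * n ≤ ((∑ x ∈ A, k x : ℕ) : ℝ) := by
          push_cast
          calc (t:ℝ) * n = ∑ y ∈ A, (t:ℝ) * n * μ y := by
                rw [← Finset.mul_sum, hμ1, mul_one]
            _ ≤ ∑ y ∈ A, ((k y : ℕ) : ℝ) :=
                Finset.sum_le_sum fun y _ => Nat.le_ceil _
        exact_mod_cast hR
      · rw [hasum]
        set c : Fin d → ℝ := ∑ b ∈ A, (((k b : ℕ) : ℝ)/(n:ℝ) - (t:ℝ) * μ b) • zCast b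
          with hc
        have h1 : (n:ℝ)⁻¹ • (∑ b ∈ A, k b • zCast b) = (t:ℝ) • q + c := by
          rw [hqrep, hc, Finset.smul_sum, Finset.smul_sum, ← Finset.sum_add_distrib]
          apply Finset.sum_congr rfl
          intro b _
          rw [← Nat.cast_smul_eq_nsmul ℝ, smul_smul, smul_smul, ← add_smul]
          congr 1
          ring
        have hkey : x - w - (n:ℝ)⁻¹ • (∑ b ∈ A, k b • zCast b) = u - c := by
          rw [h1, ← hx]; beta_reduce; abel
        rw [hkey]
        have hcnorm : ‖c‖ < η := by
          have hbound : ∀ b ∈ A, |((k b : ℕ) : ℝ)/(n:ℝ) - (t:ℝ) * μ b| ≤ 1 / (n:ℝ) := by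
            intro b hb
            have hμb : 0 ≤ μ b := hμ0 b hb
            have h2 : (t:ℝ) * n * μ b ≤ ((k b : ℕ) : ℝ) := Nat.le_ceil _
            have h3 : ((k b : ℕ) : ℝ) < (t:ℝ) * n * μ b + 1 :=
              Nat.ceil_lt_add_one (by positivity)
            have hnum1 : (t:ℝ) * μ b ≤ ((k b : ℕ) : ℝ)/(n:ℝ) := by
              rw [le_div_iff₀ hnR]; nlinarith
            have hnum2 : ((k b : ℕ) : ℝ)/(n:ℝ) ≤ (t:ℝ) * μ b + 1/(n:ℝ) := by
              rw [div_le_iff₀ hnR]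
              have : ((t:ℝ) * μ b + 1/(n:ℝ)) * n = (t:ℝ) * n * μ b + 1 := by
                field_simp
              rw [this]; linarith
            rw [abs_of_nonneg (by linarith)]
            linarith
          have hSn : S < η * n := by rw [mul_comm]; exact (div_lt_iff₀ hη).1 hn
          calc ‖c‖ ≤ ∑ b ∈ A, ‖(((k b : ℕ) : ℝ)/(n:ℝ) - (t:ℝ) * μ b) • zCast b‖ :=
                norm_sum_le _ _
            _ = ∑ b ∈ A, |((k b : ℕ) : ℝ)/(n:ℝ) - (t:ℝ) * μ b| * ‖zCast b‖ := by
                simp [norm_smul, Real.norm_eq_abs]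
            _ ≤ ∑ b ∈ A, (1/(n:ℝ)) * ‖zCast b‖ :=
                Finset.sum_le_sum fun b hb =>
                  mul_le_mul_of_nonneg_right (hbound b hb) (norm_nonneg _)
            _ = (1/(n:ℝ)) * S := by rw [← Finset.mul_sum]
            _ < η := by rw [div_mul_eq_mul_div, one_mul, div_lt_iff₀ hnR]; linarith
        apply hball
        rw [Metric.mem_ball, dist_eq_norm]
        have h4 : u - c - u = -c := by abel
        rw [h4, norm_neg]
        exact hcnorm
  constructor
  · ext x
    rw [mem_setOf_eq, key x]
    constructor
    · intro h
      exact ⟨w, rfl, x - w, h, by show w + (x - w) = x; abel⟩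
    · rintro ⟨w', hw', y, hy, rfl⟩
      rw [mem_singleton_iff] at hw'
      subst hw'
      rwa [add_sub_cancel_left]
  · intro v
    exact key (zCast v)
end
end
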